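/- Let K, L, N, M be positive integers and let A_0, …, A_{2K−1} be complex L×N matrices satisfying Aᴴ_{2k}·A_{2k+1} + Aᴴ_{2k+1}·A_{2k} = 0 for every 0 ≤ k ≤ K−1. For x ∈ ℝ^{2K} set S(x) = Σ_{k=0}^{K−1}(x_{2k}·A_{2k} + x_{2k+1}·A_{2k+1}) and T_k(x) = x_{2k}·A_{2k} + x_{2k+1}·A_{2k+1}. Then the identity ‖V − S(x)·H‖² = Σ_{k=0}^{K−1} ‖V − T_k(x)·H‖² − (K−1)·‖V‖² holds for all V ∈ ℂ^{L×M}, all H ∈ ℂ^{N×M} and all x ∈ ℝ^{2K} if and only if Aᴴ_k·A_l + Aᴴ_l·A_k = 0 for all 0 ≤ k ≠ l ≤ 2K−1. -/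

import Mathlib

open Matrix Finset

/-- Squared Frobenius norm of a complex matrix. -/
noncomputable def frobSq {m n : Type*} [Fintype m] [Fintype n] (M : Matrix m n ℂ) : ℝ :=
  ∑ i, ∑ j, ‖M i j‖ ^ 2

section helpers

variable {m n : Type*} [Fintype m] [Fintype n]

/-- Real inner product on complex matrices. -/
noncomputable def mip (X Y : Matrix m n ℂ) : ℝ := (Matrix.trace (Xᴴ * Y)).re

lemma mip_symm (X Y : Matrix m n ℂ) : mip X Y = mip Y X := by
  unfold mip
  have h : Yᴴ * X = (Xᴴ * Y)ᴴ := by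
    rw [conjTranspose_mul, conjTranspose_conjTranspose]
  rw [h, Matrix.trace_conjTranspose]
  simp

lemma frobSq_eq_mip (X : Matrix m n ℂ) : frobSq X = mip X X := by
  unfold frobSq mip
  rw [Matrix.trace]
  simp only [Matrix.diag, Matrix.mul_apply, Matrix.conjTranspose_apply, Complex.re_sum]
  rw [Finset.sum_comm]
  congr 1; ext i; congr 1; ext j
  simp [Complex.sq_norm, Complex.normSq_apply, Complex.mul_re]

lemma mip_add_right (X Y Z : Matrix m n ℂ) : mip X (Y + Z) = mip X Y + mip X Z := by
  simp [mip, Matrix.mul_add]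

lemma mip_add_left (X Y Z : Matrix m n ℂ) : mip (X + Y) Z = mip X Z + mip Y Z := by
  rw [mip_symm, mip_add_right, mip_symm Z X, mip_symm Z Y]

lemma mip_sum_right {ι : Type*} (s : Finset ι) (X : Matrix m n ℂ) (f : ι → Matrix m n ℂ) :
    mip X (∑ i ∈ s, f i) = ∑ i ∈ s, mip X (f i) := by
  simp [mip, Matrix.mul_sum, Complex.re_sum]

lemma mip_sum_left {ι : Type*} (s : Finset ι) (X : Matrix m n ℂ) (f : ι → Matrix m n ℂ) :
    mip (∑ i ∈ s, f i) X = ∑ i ∈ s, mip (f i) X := by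
  rw [mip_symm, mip_sum_right]
  exact Finset.sum_congr rfl fun i _ => mip_symm X (f i)

lemma frobSq_sub (X Y : Matrix m n ℂ) :
    frobSq (X - Y) = frobSq X - 2 * mip X Y + frobSq Y := by
  have h : X - Y = X + (-Y) := sub_eq_add_neg X Y
  rw [h, frobSq_eq_mip, mip_add_right, mip_add_left, mip_add_left, frobSq_eq_mip X,
    frobSq_eq_mip Y]
  have h1 : mip X (-Y) = -mip X Y := by simp [mip, Matrix.mul_neg]
  have h2 : mip (-Y) X = -mip Y X := by simp [mip]
  have h3 : mip (-Y) (-Y) = mip Y Y := by simp [mip, Matrix.mul_neg]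
  rw [h1, h2, h3, mip_symm Y X]
  ring

lemma frobSq_add (X Y : Matrix m n ℂ) :
    frobSq (X + Y) = frobSq X + 2 * mip X Y + frobSq Y := by
  have h : X + Y = X - (-Y) := (sub_neg_eq_add X Y).symm
  rw [h, frobSq_sub]
  have h1 : mip X (-Y) = -mip X Y := by simp [mip, Matrix.mul_neg]
  have h3 : frobSq (-Y) = frobSq Y := by
    rw [frobSq_eq_mip, frobSq_eq_mip]
    simp [mip, Matrix.mul_neg]
  rw [h1, h3]; ring

lemma frobSq_zero : frobSq (0 : Matrix m n ℂ) = 0 := by simp [frobSq]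

lemma frobSq_neg (X : Matrix m n ℂ) : frobSq (-X) = frobSq X := by
  rw [frobSq_eq_mip, frobSq_eq_mip]
  simp [mip, Matrix.mul_neg]

end helpers

section sq

variable {L N P : ℕ}

lemma two_mip (Pm Qm : Matrix (Fin L) (Fin N) ℂ) (H : Matrix (Fin N) (Fin P) ℂ) :
    2 * mip (Pm * H) (Qm * H) = (Matrix.trace (Hᴴ * (Pmᴴ * Qm + Qmᴴ * Pm) * H)).re := by
  rw [two_mul]
  nth_rewrite 2 [mip_symm]
  unfold mip
  rw [← Complex.add_re]
  congr 1
  rw [← Matrix.trace_add]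
  congr 1
  simp only [conjTranspose_mul, Matrix.mul_add, Matrix.add_mul, Matrix.mul_assoc]

/-- quadratic decomposition lemma -/
lemma decomp (K : ℕ) (V : Matrix (Fin L) (Fin P) ℂ) (f : ℕ → Matrix (Fin L) (Fin P) ℂ)
    (h : ∀ a ∈ Finset.range K, ∀ b ∈ Finset.range K, a ≠ b → mip (f a) (f b) = 0) :
    frobSq (V - ∑ a ∈ Finset.range K, f a)
      = (∑ a ∈ Finset.range K, frobSq (V - f a)) - ((K : ℝ) - 1) * frobSq V := by
  have hS : frobSq (∑ a ∈ Finset.range K, f a) = ∑ a ∈ Finset.range K, frobSq (f a) := by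
    rw [frobSq_eq_mip, mip_sum_left]
    refine Finset.sum_congr rfl fun a ha => ?_
    rw [mip_sum_right,
      Finset.sum_eq_single_of_mem a ha (fun b hb hba => h a ha b hb (Ne.symm hba)),
      ← frobSq_eq_mip]
  rw [frobSq_sub, hS, mip_sum_right]
  have hR : ∑ a ∈ Finset.range K, frobSq (V - f a)
      = ∑ a ∈ Finset.range K, (frobSq V - 2 * mip V (f a) + frobSq (f a)) :=
    Finset.sum_congr rfl fun a _ => frobSq_sub V (f a)
  rw [hR]
  rw [Finset.sum_add_distrib, Finset.sum_sub_distrib, Finset.sum_const, Finset.card_range,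
    ← Finset.mul_sum]
  ring

end sq

section part2
variable {L N P : ℕ}

lemma quad_zero (a b c d : ℝ) (Pm Qm Rm Sm : Matrix (Fin L) (Fin N) ℂ)
    (h1 : Pmᴴ * Rm + Rmᴴ * Pm = 0) (h2 : Pmᴴ * Sm + Smᴴ * Pm = 0)
    (h3 : Qmᴴ * Rm + Rmᴴ * Qm = 0) (h4 : Qmᴴ * Sm + Smᴴ * Qm = 0) :
    ((a : ℂ) • Pm + (b : ℂ) • Qm)ᴴ * ((c : ℂ) • Rm + (d : ℂ) • Sm)
      + ((c : ℂ) • Rm + (d : ℂ) • Sm)ᴴ * ((a : ℂ) • Pm + (b : ℂ) • Qm) = 0 := by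
  have e : ((a : ℂ) • Pm + (b : ℂ) • Qm)ᴴ * ((c : ℂ) • Rm + (d : ℂ) • Sm)
      + ((c : ℂ) • Rm + (d : ℂ) • Sm)ᴴ * ((a : ℂ) • Pm + (b : ℂ) • Qm)
      = ((a : ℂ) * c) • (Pmᴴ * Rm + Rmᴴ * Pm) + ((a : ℂ) * d) • (Pmᴴ * Sm + Smᴴ * Pm)
        + ((b : ℂ) * c) • (Qmᴴ * Rm + Rmᴴ * Qm) + ((b : ℂ) * d) • (Qmᴴ * Sm + Smᴴ * Qm) := by
    ext i j
    simp only [Matrix.add_apply, Matrix.mul_apply, Matrix.smul_apply, Matrix.conjTranspose_apply,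
      smul_eq_mul, star_add, star_mul', Complex.star_def, Complex.conj_ofReal, mul_add, add_mul,
      Finset.mul_sum, ← Finset.sum_add_distrib]
    refine Finset.sum_congr rfl fun k _ => ?_
    ring
  rw [e, h1, h2, h3, h4]
  simp

lemma herm_zero (B : Matrix (Fin N) (Fin N) ℂ) (hB : Bᴴ = B)
    (h : ∀ v : Fin N → ℂ, (star v ⬝ᵥ B.mulVec v).re = 0) : B = 0 := by
  have base : ∀ (α β : ℂ) (i0 j0 : Fin N),
      star (Pi.single i0 α : Fin N → ℂ) ⬝ᵥ B.mulVec (Pi.single j0 β) = star α * B i0 j0 * β := by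
    intro α β i0 j0
    simp [dotProduct, Matrix.mulVec, Pi.single_apply, apply_ite, mul_ite, ite_mul,
      mul_zero, zero_mul, Finset.mul_sum, Finset.sum_ite_eq, Finset.sum_ite_eq']
    ring
  have hd : ∀ i, B i i = 0 := by
    intro i
    have h1 := h (Pi.single i 1)
    rw [base 1 1 i i] at h1
    simp at h1
    have h2 : (B i i).im = 0 := by
      have e0 := congrFun (congrFun hB i) i
      simp only [Matrix.conjTranspose_apply] at e0
      have e1 := congrArg Complex.im e0
      simp at e1
      linarith
    exact Complex.ext (by simpa using h1) (by simpa using h2)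
  ext i j
  by_cases hij : i = j
  · subst hij; simp [hd i]
  · have hji : B j i = (starRingEnd ℂ) (B i j) := by
      have e0 := congrFun (congrFun hB j) i
      simpa [Matrix.conjTranspose_apply] using e0.symm
    have e : ∀ c : ℂ, star ((Pi.single i 1 : Fin N → ℂ) + Pi.single j c) ⬝ᵥ
        B.mulVec ((Pi.single i 1 : Fin N → ℂ) + Pi.single j c)
        = B i i + B i j * c + star c * B j i + star c * B j j * c := by
      intro c
      rw [star_add, Matrix.mulVec_add, dotProduct_add, add_dotProduct, add_dotProduct,
        base, base, base, base]
      simp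
      ring
    have hre : (B i j).re = 0 := by
      have h1 := h (Pi.single i 1 + Pi.single j 1)
      rw [e 1] at h1
      simp only [hd i, hd j, hji, star_one, one_mul, mul_one, mul_zero, add_zero, zero_add,
        Complex.add_re, Complex.conj_re] at h1
      linarith
    have him : (B i j).im = 0 := by
      have h1 := h (Pi.single i 1 + Pi.single j Complex.I)
      rw [e Complex.I] at h1
      simp [hd i, hd j, hji, Complex.add_re, Complex.mul_re] at h1
      linarith
    exact Complex.ext (by simpa using hre) (by simpa using him)

lemma trace_form_zero (hP : 0 < P) (B : Matrix (Fin N) (Fin N) ℂ)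
    (h : ∀ H : Matrix (Fin N) (Fin P) ℂ, (Matrix.trace (Hᴴ * B * H)).re = 0) :
    ∀ v : Fin N → ℂ, (star v ⬝ᵥ B.mulVec v).re = 0 := by
  intro v
  have h1 := h (Matrix.of fun a (_ : Fin P) => v a)
  have e : Matrix.trace ((Matrix.of fun a (_ : Fin P) => v a)ᴴ * B *
      (Matrix.of fun a (_ : Fin P) => v a)) = (P : ℂ) * (star v ⬝ᵥ B.mulVec v) := by
    simp only [Matrix.trace, Matrix.diag, Matrix.mul_apply, Matrix.conjTranspose_apply,
      Matrix.of_apply, dotProduct, Matrix.mulVec, Finset.sum_mul, Finset.mul_sum]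
    rw [Finset.sum_comm]
    simp only [Finset.sum_const, Finset.card_univ, Fintype.card_fin, nsmul_eq_mul]
    rw [Finset.sum_comm]
    simp [Finset.mul_sum, mul_assoc]

  rw [e] at h1
  have h2 : (P : ℝ) * (star v ⬝ᵥ B.mulVec v).re = 0 := by
    simpa [Complex.mul_re] using h1
  have h3 : (P : ℝ) ≠ 0 := Nat.cast_ne_zero.mpr hP.ne'
  exact (mul_eq_zero.mp h2).resolve_left h3

end part2

/-- For a linear design whose in-phase and quadrature weight matrices of each
variable satisfy `Aᴴ₂ₖ A₂ₖ₊₁ + Aᴴ₂ₖ₊₁ A₂ₖ = 0`, the ML metric decomposes into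
single-variable terms iff `Aᴴₖ Aₗ + Aᴴₗ Aₖ = 0` for all `k ≠ l`. -/
theorem single_symbol_decodable_characterization'
    (K L N M : ℕ) (hK : 0 < K) (hL : 0 < L) (hN : 0 < N) (hM : 0 < M)
    (A : ℕ → Matrix (Fin L) (Fin N) ℂ)
    (hpair : ∀ k < K, (A (2*k))ᴴ * A (2*k+1) + (A (2*k+1))ᴴ * A (2*k) = 0) :
    (∀ (V : Matrix (Fin L) (Fin M) ℂ) (H : Matrix (Fin N) (Fin M) ℂ) (x : ℕ → ℝ),
      frobSq (V - (∑ k ∈ Finset.range K,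
          ((x (2*k) : ℂ) • A (2*k) + (x (2*k+1) : ℂ) • A (2*k+1))) * H)
        = (∑ k ∈ Finset.range K,
            frobSq (V - ((x (2*k) : ℂ) • A (2*k) + (x (2*k+1) : ℂ) • A (2*k+1)) * H))
          - ((K : ℝ) - 1) * frobSq V)
    ↔ (∀ k l, k < 2*K → l < 2*K → k ≠ l →
        (A k)ᴴ * A l + (A l)ᴴ * A k = 0) := by
  constructor
  · intro hid k l hk hl hkl
    by_cases hb : k / 2 = l / 2
    · obtain ⟨mm, hm, hcase⟩ : ∃ m, m < K ∧ ((k = 2*m ∧ l = 2*m+1) ∨ (l = 2*m ∧ k = 2*m+1)) :=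
        ⟨k/2, by omega, by omega⟩
      rcases hcase with ⟨h1, h2⟩ | ⟨h1, h2⟩
      · subst h1; subst h2; exact hpair mm hm
      · subst h1; subst h2; rw [add_comm]; exact hpair mm hm
    · have hmip : ∀ H : Matrix (Fin N) (Fin M) ℂ, mip (A k * H) (A l * H) = 0 := by
        intro H
        set x : ℕ → ℝ := fun n => if n = k ∨ n = l then 1 else 0 with hx
        have h0 := hid 0 H x
        have key : ∀ m ∈ Finset.range K,
            ((x (2*m) : ℂ)) • A (2*m) + ((x (2*m+1) : ℂ)) • A (2*m+1)
            = (if k/2 = m then A k else 0) + (if l/2 = m then A l else 0) := by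
          intro m hm
          simp only [Finset.mem_range] at hm
          simp only [hx]
          by_cases h1 : m = k/2
          · have c4 : ¬ l/2 = m := by omega
            rw [if_pos (show k/2 = m from h1.symm), if_neg c4]
            rcases (by omega : k = 2*m ∨ k = 2*m+1) with hk2 | hk2
            · rw [if_pos (by omega : 2*m = k ∨ 2*m = l),
                if_neg (by omega : ¬(2*m+1 = k ∨ 2*m+1 = l)), hk2]
              simp
            · rw [if_neg (by omega : ¬(2*m = k ∨ 2*m = l)),
                if_pos (by omega : 2*m+1 = k ∨ 2*m+1 = l), hk2]
              simp
          · by_cases h2 : m = l/2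
            · have c3 : ¬ k/2 = m := by omega
              rw [if_neg c3, if_pos (show l/2 = m from h2.symm)]
              rcases (by omega : l = 2*m ∨ l = 2*m+1) with hl2 | hl2
              · rw [if_pos (by omega : 2*m = k ∨ 2*m = l),
                  if_neg (by omega : ¬(2*m+1 = k ∨ 2*m+1 = l)), hl2]
                simp
              · rw [if_neg (by omega : ¬(2*m = k ∨ 2*m = l)),
                  if_pos (by omega : 2*m+1 = k ∨ 2*m+1 = l), hl2]
                simp
            · rw [if_neg (by omega : ¬(2*m = k ∨ 2*m = l)),
                if_neg (by omega : ¬(2*m+1 = k ∨ 2*m+1 = l)),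
                if_neg (show ¬ k/2 = m from fun h => h1 h.symm),
                if_neg (show ¬ l/2 = m from fun h => h2 h.symm)]
              simp
        have hk2 : k/2 ∈ Finset.range K := by simp only [Finset.mem_range]; omega
        have hl2 : l/2 ∈ Finset.range K := by simp only [Finset.mem_range]; omega
        have hsum : (∑ m ∈ Finset.range K,
            ((x (2*m) : ℂ) • A (2*m) + (x (2*m+1) : ℂ) • A (2*m+1))) = A k + A l := by
          rw [Finset.sum_congr rfl key, Finset.sum_add_distrib, Finset.sum_ite_eq,
            Finset.sum_ite_eq, if_pos hk2, if_pos hl2]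
        have key2 : ∀ m ∈ Finset.range K,
            frobSq ((0 : Matrix (Fin L) (Fin M) ℂ)
              - ((x (2*m) : ℂ) • A (2*m) + (x (2*m+1) : ℂ) • A (2*m+1)) * H)
            = (if k/2 = m then frobSq (A k * H) else 0)
              + (if l/2 = m then frobSq (A l * H) else 0) := by
          intro m hm
          rw [key m hm]
          by_cases h3 : k/2 = m <;> by_cases h4 : l/2 = m
          · exact absurd (h3.trans h4.symm) hb
          · simp [h3, h4, zero_sub, frobSq_neg]
          · simp [h3, h4, zero_sub, frobSq_neg]
          · simp [h3, h4, frobSq_zero]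
        have hsum2 : (∑ m ∈ Finset.range K,
            frobSq ((0 : Matrix (Fin L) (Fin M) ℂ)
              - ((x (2*m) : ℂ) • A (2*m) + (x (2*m+1) : ℂ) • A (2*m+1)) * H))
            = frobSq (A k * H) + frobSq (A l * H) := by
          rw [Finset.sum_congr rfl key2, Finset.sum_add_distrib, Finset.sum_ite_eq,
            Finset.sum_ite_eq, if_pos hk2, if_pos hl2]
        rw [hsum, hsum2] at h0
        simp only [frobSq_zero, mul_zero, sub_zero, zero_sub, frobSq_neg] at h0
        rw [Matrix.add_mul, frobSq_add] at h0
        linarith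
      have htr : ∀ H : Matrix (Fin N) (Fin M) ℂ,
          (Matrix.trace (Hᴴ * ((A k)ᴴ * A l + (A l)ᴴ * A k) * H)).re = 0 := by
        intro H
        rw [← two_mip, hmip H]
        ring
      have hherm : ((A k)ᴴ * A l + (A l)ᴴ * A k)ᴴ = (A k)ᴴ * A l + (A l)ᴴ * A k := by
        rw [conjTranspose_add, conjTranspose_mul, conjTranspose_mul,
          conjTranspose_conjTranspose, conjTranspose_conjTranspose, add_comm]
      exact herm_zero _ hherm (trace_form_zero hM _ htr)
  · intro hA V H x
    rw [Matrix.sum_mul]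
    refine decomp K V _ ?_
    intro a ha b hb hab
    simp only [Finset.mem_range] at ha hb
    have hz : ((x (2*a) : ℂ) • A (2*a) + (x (2*a+1) : ℂ) • A (2*a+1))ᴴ
          * ((x (2*b) : ℂ) • A (2*b) + (x (2*b+1) : ℂ) • A (2*b+1))
        + ((x (2*b) : ℂ) • A (2*b) + (x (2*b+1) : ℂ) • A (2*b+1))ᴴ
          * ((x (2*a) : ℂ) • A (2*a) + (x (2*a+1) : ℂ) • A (2*a+1)) = 0 :=
      quad_zero _ _ _ _ _ _ _ _
        (hA (2*a) (2*b) (by omega) (by omega) (by omega))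
        (hA (2*a) (2*b+1) (by omega) (by omega) (by omega))
        (hA (2*a+1) (2*b) (by omega) (by omega) (by omega))
        (hA (2*a+1) (2*b+1) (by omega) (by omega) (by omega))
    have h2 := two_mip ((x (2*a) : ℂ) • A (2*a) + (x (2*a+1) : ℂ) • A (2*a+1))
      ((x (2*b) : ℂ) • A (2*b) + (x (2*b+1) : ℂ) • A (2*b+1)) H
    rw [hz] at h2
    simp only [Matrix.mul_zero, Matrix.zero_mul, Matrix.trace_zero, Complex.zero_re] at h2
    linarith
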